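/- The key set-inclusion step of Theorem 2: with Π̄_y ℓ_a = ∫₀¹ h_{y,a}(α) dα where h_{y,a}(α) = sup{ℓ_a(ϑ) : π_y(ϑ) > α}, and L_a(y,θ) = h_{y,a}(π_y(θ)) > 0, if Π̄_y ℓ_a ≤ α L_a(y,θ) for some action a, then π_y(θ) ≤ α. -/

import Mathlib

open Set MeasureTheory

theorem choquet_small_implies_contour_small
    {Θ : Type*} [Nonempty Θ] (π : Θ → ℝ) (ℓ : Θ → ℝ)
    (hπ0 : ∀ ϑ, 0 ≤ π ϑ) (hπ1 : ∀ ϑ, π ϑ ≤ 1) (hℓ : ∀ ϑ, 0 ≤ ℓ ϑ)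
    (h : ℝ → ℝ) (hdef : ∀ α, h α = ⨆ ϑ ∈ {ϑ : Θ | π ϑ > α}, ℓ ϑ)
    (hanti : AntitoneOn h (Icc (0 : ℝ) 1))
    (hint : IntegrableOn h (Ioo (0 : ℝ) 1))
    (θ : Θ) (hLpos : 0 < h (π θ))
    (α : ℝ) (hα : α ∈ Icc (0 : ℝ) 1)
    (hsmall : (∫ β in Ioo (0 : ℝ) 1, h β) ≤ α * h (π θ)) :
    π θ ≤ α := by
  have hnn : ∀ β, 0 ≤ h β := by
    intro β
    rw [hdef]
    exact Real.iSup_nonneg fun ϑ => Real.iSup_nonneg fun _ => hℓ ϑ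
  have hθmem : π θ ∈ Icc (0 : ℝ) 1 := ⟨hπ0 θ, hπ1 θ⟩
  have hsub : Ioo (0 : ℝ) (π θ) ⊆ Ioo (0 : ℝ) 1 :=
    Ioo_subset_Ioo le_rfl (hπ1 θ)
  have hint' : IntegrableOn h (Ioo (0 : ℝ) (π θ)) := hint.mono_set hsub
  have h1 : π θ * h (π θ) ≤ ∫ β in Ioo (0 : ℝ) (π θ), h β := by
    have hconst : ∫ β in Ioo (0 : ℝ) (π θ), h (π θ) = π θ * h (π θ) := by
      rw [setIntegral_const]
      simp [Real.volume_Ioo, max_eq_left (hπ0 θ)]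
    calc π θ * h (π θ) = ∫ β in Ioo (0 : ℝ) (π θ), h (π θ) := hconst.symm
      _ ≤ ∫ β in Ioo (0 : ℝ) (π θ), h β := by
          apply setIntegral_mono_on (integrableOn_const measure_Ioo_lt_top.ne)
            hint' measurableSet_Ioo
          intro β hβ
          exact hanti ⟨hβ.1.le, hβ.2.le.trans (hπ1 θ)⟩ hθmem hβ.2.le
  have h2 : (∫ β in Ioo (0 : ℝ) (π θ), h β) ≤ ∫ β in Ioo (0 : ℝ) 1, h β := by
    apply setIntegral_mono_set hint
    · exact Filter.Eventually.of_forall fun β => hnn β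
    · exact Filter.Eventually.of_forall hsub
  have : π θ * h (π θ) ≤ α * h (π θ) := h1.trans (h2.trans hsmall)
  exact le_of_mul_le_mul_right (by simpa [mul_comm] using this) hLpos
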